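/- Let n tasks be given with processing times p_j ∈ ℕ (p_j ≥ 1), release shifts r_j, and deadlines d_j, over a finite discrete horizon. Consider the earliest-deadline-first (EDF) rule: at each shift t (processed in increasing order), among tasks j that are released (r_j ≤ t) and not yet fully processed, schedule one with minimal deadline d_j (if any such task exists). Then: if there exists any feasible preemptive schedule (each task j receiving p_j shifts within [r_j, d_j), at most one task per shift), the EDF schedule is also feasible, i.e., EDF completes each task j by its deadline d_j. -/
import Mathlib


/-- Remaining processing times under the earliest-deadline-first (EDF) rule:
at each shift `t`, among released, unfinished tasks, one with minimal deadline
is processed for one unit (ties broken arbitrarily via the list order). -/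
noncomputable def edfRem (n : ℕ) (p r d : Fin n → ℕ) : ℕ → Fin n → ℕ
  | 0 => p
  | t + 1 => fun j =>
      match (Finset.univ.filter
          (fun i : Fin n => r i ≤ t ∧ 0 < edfRem n p r d t i)).toList.argmin d with
      | some i => if i = j then edfRem n p r d t j - 1 else edfRem n p r d t j
      | none => edfRem n p r d t j

noncomputable def edfChoice (n : ℕ) (p r d : Fin n → ℕ) (t : ℕ) : Option (Fin n) :=
  (Finset.univ.filter
      (fun i : Fin n => r i ≤ t ∧ 0 < edfRem n p r d t i)).toList.argmin d

lemma edfRem_succ (n : ℕ) (p r d : Fin n → ℕ) (t : ℕ) (j : Fin n) :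
    edfRem n p r d (t + 1) j =
      match edfChoice n p r d t with
      | some i => if i = j then edfRem n p r d t j - 1 else edfRem n p r d t j
      | none => edfRem n p r d t j := rfl

lemma edfChoice_some (n : ℕ) (p r d : Fin n → ℕ) {t : ℕ} {i : Fin n}
    (h : edfChoice n p r d t = some i) : r i ≤ t ∧ 0 < edfRem n p r d t i := by
  have h' : i ∈ (Finset.univ.filter
      (fun i : Fin n => r i ≤ t ∧ 0 < edfRem n p r d t i)).toList.argmin d :=
    Option.mem_def.mpr h
  have := List.argmin_mem h'
  rw [Finset.mem_toList, Finset.mem_filter] at this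
  exact this.2

lemma edfChoice_min (n : ℕ) (p r d : Fin n → ℕ) {t : ℕ} {i : Fin n}
    (h : edfChoice n p r d t = some i) {k : Fin n} (hk : r k ≤ t)
    (hk2 : 0 < edfRem n p r d t k) : d i ≤ d k := by
  have h' : i ∈ (Finset.univ.filter
      (fun i : Fin n => r i ≤ t ∧ 0 < edfRem n p r d t i)).toList.argmin d :=
    Option.mem_def.mpr h
  refine List.le_of_mem_argmin ?_ h'
  rw [Finset.mem_toList, Finset.mem_filter]
  exact ⟨Finset.mem_univ _, hk, hk2⟩

lemma edfChoice_none (n : ℕ) (p r d : Fin n → ℕ) {t : ℕ}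
    (h : edfChoice n p r d t = none) {k : Fin n} (hk : r k ≤ t) :
    edfRem n p r d t k = 0 := by
  have h' : (Finset.univ.filter
      (fun i : Fin n => r i ≤ t ∧ 0 < edfRem n p r d t i)).toList = [] :=
    List.argmin_eq_none.mp h
  by_contra hne
  have : k ∈ (Finset.univ.filter
      (fun i : Fin n => r i ≤ t ∧ 0 < edfRem n p r d t i)).toList := by
    rw [Finset.mem_toList, Finset.mem_filter]
    exact ⟨Finset.mem_univ _, hk, Nat.pos_of_ne_zero hne⟩
  simp [h'] at this

noncomputable def edfCnt (n : ℕ) (p r d : Fin n → ℕ) (t : ℕ) (j : Fin n) : ℕ :=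
  ((Finset.range t).filter (fun s => edfChoice n p r d s = some j)).card


lemma edfRem_add_cnt (n : ℕ) (p r d : Fin n → ℕ) :
    ∀ t j, edfRem n p r d t j + edfCnt n p r d t j = p j := by
  intro t
  induction t with
  | zero => intro j; simp [edfRem, edfCnt]
  | succ t ih =>
    intro j
    have hins : edfCnt n p r d (t+1) j =
        edfCnt n p r d t j + (if edfChoice n p r d t = some j then 1 else 0) := by
      unfold edfCnt
      rw [Finset.range_add_one, Finset.filter_insert]
      split <;> simp [Finset.card_insert_of_notMem, Finset.mem_filter]
    have hrem := ih j
    cases hc : edfChoice n p r d t with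
    | none =>
      rw [edfRem_succ, hins, hc]
      simpa using hrem
    | some i =>
      rw [edfRem_succ, hins, hc]
      have hpos := (edfChoice_some n p r d hc).2
      by_cases h : i = j
      · subst h
        simp
        have test : ∀ (R C : ℕ), 0 < R → R + C = p i → R - 1 + (C + 1) = p i := by
          intro R C h1 h2
          omega
        exact test _ _ hpos hrem
      · simp [h]
        exact hrem

/-- Feasibility of a schedule. -/
def EdfFeas (n : ℕ) (p r d : Fin n → ℕ) (σ : ℕ → Option (Fin n)) : Prop :=
  ∀ j, (∀ t, σ t = some j → r j ≤ t ∧ t < d j) ∧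
    ((Finset.Ico (r j) (d j)).filter (fun t => σ t = some j)).card = p j

lemma agree_cnt (n : ℕ) (p r d : Fin n → ℕ) (σ : ℕ → Option (Fin n))
    (hfe : EdfFeas n p r d σ) (t : ℕ) (hag : ∀ s, s < t → σ s = edfChoice n p r d s)
    (j : Fin n) :
    (((Finset.Ico (r j) (d j)).filter (fun s => σ s = some j)).filter (fun s => s < t)).card
      = edfCnt n p r d t j := by
  unfold edfCnt
  congr 1
  ext s
  simp only [Finset.mem_filter, Finset.mem_Ico, Finset.mem_range]
  constructor
  · rintro ⟨⟨_, hs⟩, hst⟩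
    exact ⟨hst, (hag s hst) ▸ hs⟩
  · rintro ⟨hst, hs⟩
    have hσ : σ s = some j := (hag s hst).symm ▸ hs
    exact ⟨⟨(hfe j).1 s hσ, hσ⟩, hst⟩

lemma exists_later (n : ℕ) (p r d : Fin n → ℕ) (σ : ℕ → Option (Fin n))
    (hfe : EdfFeas n p r d σ) (t : ℕ) (hag : ∀ s, s < t → σ s = edfChoice n p r d s)
    (j : Fin n) (hpos : 0 < edfRem n p r d t j) :
    ∃ u, t ≤ u ∧ σ u = some j ∧ u < d j := by
  by_contra hcon
  push_neg at hcon
  set F := (Finset.Ico (r j) (d j)).filter (fun s => σ s = some j) with hF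
  have hall : ∀ s ∈ F, s < t := by
    intro s hs
    rw [hF, Finset.mem_filter] at hs
    by_contra hge
    have hd := hcon s (Nat.le_of_not_lt hge) hs.2
    exact absurd ((hfe j).1 s hs.2).2 (Nat.not_lt.mpr hd)
  have : F.filter (fun s => s < t) = F := Finset.filter_true_of_mem hall
  have hcard : edfCnt n p r d t j = p j := by
    rw [← agree_cnt n p r d σ hfe t hag j, ← hF, this, (hfe j).2]
  have hsum := edfRem_add_cnt n p r d t j
  have test : ∀ R C P : ℕ, 0 < R → R + C = P → C = P → False := by
    intro R C P h1 h2 h3; omega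
  exact test _ _ _ hpos hsum hcard

lemma pos_of_sched (n : ℕ) (p r d : Fin n → ℕ) (σ : ℕ → Option (Fin n))
    (hfe : EdfFeas n p r d σ) (t : ℕ) (hag : ∀ s, s < t → σ s = edfChoice n p r d s)
    (k : Fin n) (hσt : σ t = some k) : 0 < edfRem n p r d t k := by
  set F := (Finset.Ico (r k) (d k)).filter (fun s => σ s = some k) with hF
  have htF : t ∈ F := by
    rw [hF, Finset.mem_filter, Finset.mem_Ico]
    exact ⟨(hfe k).1 t hσt, hσt⟩
  have hsub : F.filter (fun s => s < t) ⊆ F.erase t := by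
    intro s hs
    rw [Finset.mem_filter] at hs
    exact Finset.mem_erase.mpr ⟨Nat.ne_of_lt hs.2, hs.1⟩
  have hle : edfCnt n p r d t k ≤ p k - 1 := by
    rw [← agree_cnt n p r d σ hfe t hag k, ← hF]
    calc (F.filter (fun s => s < t)).card ≤ (F.erase t).card := Finset.card_le_card hsub
      _ = p k - 1 := by rw [Finset.card_erase_of_mem htF, (hfe k).2]
  have hp1 : 1 ≤ p k := by
    rw [← (hfe k).2]
    exact Finset.card_pos.mpr ⟨t, htF⟩
  have hsum := edfRem_add_cnt n p r d t k
  have test : ∀ R C P : ℕ, R + C = P → C ≤ P - 1 → 1 ≤ P → 0 < R := by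
    intro R C P h1 h2 h3; omega
  exact test _ _ _ hsum hle hp1

lemma feas_swap (n : ℕ) (p r d : Fin n → ℕ) (σ : ℕ → Option (Fin n))
    (hfe : EdfFeas n p r d σ) (t u : ℕ)
    (h' : ∀ j s, σ (Equiv.swap t u s) = some j → r j ≤ s ∧ s < d j) :
    EdfFeas n p r d (fun s => σ (Equiv.swap t u s)) := by
  intro j
  refine ⟨h' j, ?_⟩
  rw [← (hfe j).2]
  apply Finset.card_bij' (fun s _ => Equiv.swap t u s) (fun s _ => Equiv.swap t u s)
  · intro a ha
    rw [Finset.mem_filter] at ha ⊢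
    refine ⟨?_, ha.2⟩
    rw [Finset.mem_Ico]
    exact (hfe j).1 _ ha.2
  · intro a ha
    rw [Finset.mem_filter] at ha ⊢
    have hσ' : σ (Equiv.swap t u (Equiv.swap t u a)) = some j := by
      rw [Equiv.swap_apply_self]; exact ha.2
    refine ⟨?_, hσ'⟩
    rw [Finset.mem_Ico]
    exact h' j _ hσ'
  · intro a _; exact Equiv.swap_apply_self _ _ _
  · intro a _; exact Equiv.swap_apply_self _ _ _

lemma edf_sim (n : ℕ) (p r d : Fin n → ℕ) (σ0 : ℕ → Option (Fin n))
    (h0 : EdfFeas n p r d σ0) :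
    ∀ T, ∃ σ, EdfFeas n p r d σ ∧ ∀ s, s < T → σ s = edfChoice n p r d s := by
  intro T
  induction T with
  | zero => exact ⟨σ0, h0, fun s hs => absurd hs (Nat.not_lt_zero s)⟩
  | succ T ih =>
    obtain ⟨σ, hfe, hag⟩ := ih
    cases hc : edfChoice n p r d T with
    | none =>
      refine ⟨σ, hfe, fun s hs => ?_⟩
      rcases Nat.lt_succ_iff_lt_or_eq.mp hs with hlt | rfl
      · exact hag s hlt
      · rw [hc]
        cases hσT : σ s with
        | none => rfl
        | some k =>
          have hpos := pos_of_sched n p r d σ hfe s hag k hσT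
          have hrk : r k ≤ s := ((hfe k).1 s hσT).1
          have := edfChoice_none n p r d hc hrk
          omega
    | some i =>
      have hi := edfChoice_some n p r d hc
      by_cases hσT : σ T = some i
      · refine ⟨σ, hfe, fun s hs => ?_⟩
        rcases Nat.lt_succ_iff_lt_or_eq.mp hs with hlt | rfl
        · exact hag s hlt
        · rw [hc, hσT]
      · obtain ⟨u, hTu, hσu, hud⟩ := exists_later n p r d σ hfe T hag i hi.2
        have hne : T ≠ u := fun h => hσT (h ▸ hσu)
        have hTltu : T < u := Nat.lt_of_le_of_ne hTu hne
        have h' : ∀ j s, σ (Equiv.swap T u s) = some j → r j ≤ s ∧ s < d j := by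
          intro j s hs
          by_cases hsT : s = T
          · subst hsT
            rw [Equiv.swap_apply_left] at hs
            rw [hσu] at hs
            obtain rfl : i = j := Option.some.inj hs
            exact ⟨hi.1, Nat.lt_trans hTltu hud⟩
          · by_cases hsu : s = u
            · subst hsu
              rw [Equiv.swap_apply_right] at hs
              have hj := (hfe j).1 T hs
              have hpos := pos_of_sched n p r d σ hfe T hag j hs
              have hdij : d i ≤ d j := edfChoice_min n p r d hc hj.1 hpos
              exact ⟨Nat.le_trans hj.1 (Nat.le_of_lt hTltu), Nat.lt_of_lt_of_le hud hdij⟩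
            · rw [Equiv.swap_apply_of_ne_of_ne hsT hsu] at hs
              exact (hfe j).1 s hs
        refine ⟨fun s => σ (Equiv.swap T u s), feas_swap n p r d σ hfe T u h', ?_⟩
        intro s hs
        rcases Nat.lt_succ_iff_lt_or_eq.mp hs with hlt | rfl
        · show σ (Equiv.swap T u s) = edfChoice n p r d s
          rw [Equiv.swap_apply_of_ne_of_ne (Nat.ne_of_lt hlt)
            (Nat.ne_of_lt (Nat.lt_trans hlt hTltu))]
          exact hag s hlt
        · show σ (Equiv.swap s u s) = edfChoice n p r d s
          rw [Equiv.swap_apply_left, hσu, hc]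

/-- Optimality of the Jackson Preemptive Schedule (EDF) in discrete time: if
any feasible preemptive single-machine schedule exists, then EDF completes
every task by its deadline. -/
theorem edf_optimal (n : ℕ) (p r d : Fin n → ℕ) (hp : ∀ j, 1 ≤ p j)
    (hfeas : ∃ σ : ℕ → Option (Fin n),
      ∀ j, (∀ t, σ t = some j → r j ≤ t ∧ t < d j) ∧
        ((Finset.Ico (r j) (d j)).filter (fun t => σ t = some j)).card = p j) :
    ∀ j, edfRem n p r d (d j) j = 0 := by
  obtain ⟨σ0, h0⟩ := hfeas
  intro j
  obtain ⟨σ, hfe, hag⟩ := edf_sim n p r d σ0 h0 (d j)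
  have hsub : (Finset.Ico (r j) (d j)).filter (fun s => σ s = some j) ⊆
      (Finset.range (d j)).filter (fun s => edfChoice n p r d s = some j) := by
    intro s hs
    rw [Finset.mem_filter, Finset.mem_Ico] at hs
    rw [Finset.mem_filter, Finset.mem_range]
    exact ⟨hs.1.2, (hag s hs.1.2) ▸ hs.2⟩
  have hge : p j ≤ edfCnt n p r d (d j) j := by
    rw [← (hfe j).2]
    exact Finset.card_le_card hsub
  have hsum := edfRem_add_cnt n p r d (d j) j
  have test : ∀ R C P : ℕ, R + C = P → P ≤ C → R = 0 := by
    intro R C P h1 h2; omega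
  exact test _ _ _ hsum hge
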